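/- Let f = Σ_{i=1}^k w_i f_i and g = Σ_{i=1}^k w_i g_i, where the w_i are positive weights summing to 1, the f_i and g_i are probability densities on ℝ^d with f_i > 0, and g_i = f_i for all i except one index l. Then ∫ (f−g)²/f ≤ w_l · (∫ g_l²/f_l − 1). In particular, if f_l(x) = φ_d(x−a) and g_l(x) = φ_d(x−b) are Gaussian densities with ‖a−b‖² ≤ 1, then ∫ (f−g)²/f ≤ w_l·(exp(‖a−b‖²) − 1) ≤ 2·w_l·‖a−b‖². -/

import Mathlib

open MeasureTheory Real ENNReal

/-- A probability density on `EuclideanSpace ℝ (Fin d)`. -/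
def IsDensityE (d : ℕ) (f : EuclideanSpace ℝ (Fin d) → ℝ) : Prop :=
  Measurable f ∧ (∀ x, 0 ≤ f x) ∧ (∫⁻ x, ENNReal.ofReal (f x)) = 1

/-- The standard Gaussian density on ℝ^d: `φ_d(x) = (2π)^{-d/2} exp(-‖x‖²/2)`. -/
noncomputable def stdGauss (d : ℕ) (x : EuclideanSpace ℝ (Fin d)) : ℝ :=
  (2 * Real.pi) ^ (-(d : ℝ)/2) * Real.exp (-(‖x‖^2)/2)

lemma stdGauss_nonneg (d : ℕ) (x : EuclideanSpace ℝ (Fin d)) : 0 ≤ stdGauss d x := by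
  unfold stdGauss; positivity

lemma stdGauss_lintegral (d : ℕ) :
    (∫⁻ x : EuclideanSpace ℝ (Fin d), ENNReal.ofReal (stdGauss d x)) = 1 := by
  have hInt : Integrable (fun x : EuclideanSpace ℝ (Fin d) ↦ rexp (-(1/2 : ℝ) * ‖x‖^2)) := by
    have := (GaussianFourier.integrable_cexp_neg_mul_sq_norm_add (V := EuclideanSpace ℝ (Fin d))
      (b := (1/2 : ℂ)) (by norm_num) 0 0).norm
    refine this.congr (Filter.Eventually.of_forall fun x => ?_)
    simp [Complex.norm_exp]
    norm_cast
  have hI : ∫ x : EuclideanSpace ℝ (Fin d), rexp (-(1/2 : ℝ) * ‖x‖^2)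
      = (2 * π) ^ ((d : ℝ)/2) := by
    rw [GaussianFourier.integral_rexp_neg_mul_sq_norm (by norm_num : (0:ℝ) < 1/2)]
    rw [finrank_euclideanSpace_fin]
    congr 1
    rw [div_div_eq_mul_div, div_one, mul_comm]
  have hInt2 : Integrable (stdGauss d) := by
    have := hInt.const_mul ((2 * π) ^ (-(d : ℝ)/2))
    refine this.congr (Filter.Eventually.of_forall fun x => ?_)
    unfold stdGauss; ring_nf
  have hIs : ∫ x, stdGauss d x = 1 := by
    unfold stdGauss
    rw [integral_const_mul]
    have : ∀ x : EuclideanSpace ℝ (Fin d), rexp (-(‖x‖^2)/2) = rexp (-(1/2:ℝ) * ‖x‖^2) := by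
      intro x; ring_nf
    simp_rw [this, hI, ← Real.rpow_add (by positivity : (0:ℝ) < 2*π)]
    rw [show -(d:ℝ)/2 + (d:ℝ)/2 = 0 by ring, Real.rpow_zero]
  rw [← ofReal_integral_eq_lintegral_ofReal hInt2
    (Filter.Eventually.of_forall (stdGauss_nonneg d)), hIs, ofReal_one]

lemma stdGauss_lintegral_sub (d : ℕ) (c : EuclideanSpace ℝ (Fin d)) :
    (∫⁻ x : EuclideanSpace ℝ (Fin d), ENNReal.ofReal (stdGauss d (x - c))) = 1 := by
  rw [lintegral_sub_right_eq_self (fun x => ENNReal.ofReal (stdGauss d x)) c]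
  exact stdGauss_lintegral d

lemma stdGauss_ratio (d : ℕ) (a b x : EuclideanSpace ℝ (Fin d)) :
    (stdGauss d (x - b))^2 / stdGauss d (x - a)
      = rexp (‖a - b‖^2) * stdGauss d (x - ((2:ℝ) • b - a)) := by
  have key : -(‖x - b‖^2) + ‖x - a‖^2/2 = ‖a - b‖^2 - ‖x - ((2:ℝ) • b - a)‖^2/2 := by
    have e1 : ‖x - b‖^2 = ‖x‖^2 - 2 * inner ℝ x b + ‖b‖^2 := norm_sub_sq_real x b
    have e2 : ‖x - a‖^2 = ‖x‖^2 - 2 * inner ℝ x a + ‖a‖^2 := norm_sub_sq_real x a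
    have e3 : ‖a - b‖^2 = ‖a‖^2 - 2 * inner ℝ a b + ‖b‖^2 := norm_sub_sq_real a b
    have e4 : ‖x - ((2:ℝ) • b - a)‖^2
        = ‖x‖^2 - 2 * inner ℝ x ((2:ℝ) • b - a) + ‖(2:ℝ) • b - a‖^2 :=
      norm_sub_sq_real x _
    have e5 : (inner ℝ x ((2:ℝ) • b - a) : ℝ) = 2 * inner ℝ x b - inner ℝ x a := by
      rw [inner_sub_right, inner_smul_right]
    have e6 : ‖(2:ℝ) • b - a‖^2 = ‖(2:ℝ) • b‖^2 - 2 * inner ℝ ((2:ℝ) • b) a + ‖a‖^2 :=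
      norm_sub_sq_real _ a
    have e7 : (inner ℝ ((2:ℝ) • b) a : ℝ) = 2 * inner ℝ a b := by
      rw [inner_smul_left, real_inner_comm]; norm_num
    have e8 : ‖(2:ℝ) • b‖^2 = 4 * ‖b‖^2 := by
      rw [norm_smul]; rw [mul_pow]; norm_num
    rw [e1, e2, e3, e4, e5, e6, e7, e8]; ring
  unfold stdGauss
  rw [div_eq_iff (by positivity)]
  rw [mul_pow, ← Real.exp_nat_mul]
  have : rexp (‖a-b‖^2) * ((2*π) ^ (-(d:ℝ)/2) * rexp (-(‖x - ((2:ℝ)•b-a)‖^2)/2))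
        * ((2*π) ^ (-(d:ℝ)/2) * rexp (-(‖x-a‖^2)/2))
      = ((2*π) ^ (-(d:ℝ)/2))^2
        * rexp (‖a-b‖^2 + -(‖x - ((2:ℝ)•b-a)‖^2)/2 + -(‖x-a‖^2)/2) := by
    rw [Real.exp_add, Real.exp_add]; ring
  rw [this]
  congr 1
  rw [Real.exp_eq_exp]
  push_cast
  linarith [key]

lemma exp_le_one_add_two_mul {t : ℝ} (ht0 : 0 ≤ t) (ht1 : t ≤ 1) :
    rexp t ≤ 1 + 2 * t := by
  have hc := convexOn_exp.2 (Set.mem_univ (0:ℝ)) (Set.mem_univ (1:ℝ))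
    (by linarith : (0:ℝ) ≤ 1 - t) ht0 (by ring : (1 - t) + t = 1)
  simp only [smul_eq_mul, mul_zero, mul_one, zero_add, Real.exp_zero] at hc
  have he := Real.exp_one_lt_d9
  nlinarith

theorem stmt16 (d k : ℕ) (hd : 1 ≤ d) (hk : 1 ≤ k)
    (w : Fin k → ℝ) (hw : ∀ i, 0 < w i) (hw1 : ∑ i, w i = 1)
    (f g : Fin k → (EuclideanSpace ℝ (Fin d) → ℝ))
    (hf : ∀ i, IsDensityE d (f i)) (hg : ∀ i, IsDensityE d (g i))
    (hfpos : ∀ i x, 0 < f i x)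
    (l : Fin k) (hfg : ∀ i, i ≠ l → g i = f i) :
    (∫⁻ x, ENNReal.ofReal
        ((∑ i, w i * f i x - ∑ i, w i * g i x)^2 / (∑ i, w i * f i x)))
      ≤ ENNReal.ofReal (w l) *
          ((∫⁻ x, ENNReal.ofReal ((g l x)^2 / f l x)) - 1) ∧
    ∀ a b : EuclideanSpace ℝ (Fin d),
      (∀ x, f l x = stdGauss d (x - a)) → (∀ x, g l x = stdGauss d (x - b)) →
      ‖a - b‖^2 ≤ 1 →
      (∫⁻ x, ENNReal.ofReal
          ((∑ i, w i * f i x - ∑ i, w i * g i x)^2 / (∑ i, w i * f i x)))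
        ≤ ENNReal.ofReal (2 * w l * ‖a - b‖^2) := by
  obtain ⟨hfm, hfn, hfi⟩ := hf l
  obtain ⟨hgm, hgn, hgi⟩ := hg l
  have hΔ : ∀ x : EuclideanSpace ℝ (Fin d),
      (∑ i, w i * f i x) - ∑ i, w i * g i x = w l * (f l x - g l x) := by
    intro x
    rw [← Finset.sum_sub_distrib]
    rw [Finset.sum_eq_single l (fun i _ hi => by rw [hfg i hi]; ring)
      (fun hl => absurd (Finset.mem_univ l) hl)]
    ring
  have hFl : ∀ x : EuclideanSpace ℝ (Fin d), w l * f l x ≤ ∑ i, w i * f i x := fun x =>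
    Finset.single_le_sum (f := fun i => w i * f i x)
      (fun i _ => le_of_lt (mul_pos (hw i) (hfpos i x))) (Finset.mem_univ l)
  have hkey : ∀ x : EuclideanSpace ℝ (Fin d),
      ((∑ i, w i * f i x) - ∑ i, w i * g i x)^2 / (∑ i, w i * f i x)
        ≤ w l * ((f l x - g l x)^2 / f l x) := by
    intro x
    rw [hΔ x]
    have hpos : 0 < w l * f l x := mul_pos (hw l) (hfpos l x)
    calc (w l * (f l x - g l x))^2 / (∑ i, w i * f i x)
        ≤ (w l * (f l x - g l x))^2 / (w l * f l x) :=
          div_le_div_of_nonneg_left (sq_nonneg _) hpos (hFl x)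
      _ = w l * ((f l x - g l x)^2 / f l x) := by
          have hne := (hfpos l x).ne'
          have hwne := (hw l).ne'
          rw [mul_pow]
          field_simp
  have hm1 : Measurable fun x : EuclideanSpace ℝ (Fin d) =>
      ENNReal.ofReal ((f l x - g l x)^2 / f l x) :=
    (((hfm.sub hgm).pow_const 2).div hfm).ennreal_ofReal
  have hm2 : Measurable fun x : EuclideanSpace ℝ (Fin d) =>
      ENNReal.ofReal ((g l x)^2 / f l x) :=
    ((hgm.pow_const 2).div hfm).ennreal_ofReal
  have hg2 : (∫⁻ x, ENNReal.ofReal (2 * g l x)) = 2 := by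
    calc (∫⁻ x, ENNReal.ofReal (2 * g l x))
        = ∫⁻ x, (2 : ℝ≥0∞) * ENNReal.ofReal (g l x) := by
          simp_rw [ENNReal.ofReal_mul (by norm_num : (0:ℝ) ≤ 2)]
          norm_num
      _ = 2 * ∫⁻ x, ENNReal.ofReal (g l x) := lintegral_const_mul' _ _ (by norm_num)
      _ = 2 := by rw [hgi, mul_one]
  have hsum : (∫⁻ x, ENNReal.ofReal ((f l x - g l x)^2 / f l x)) + 2
      = (∫⁻ x, ENNReal.ofReal ((g l x)^2 / f l x)) + 1 := by
    have hpt : ∀ x : EuclideanSpace ℝ (Fin d),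
        ENNReal.ofReal ((f l x - g l x)^2 / f l x) + ENNReal.ofReal (2 * g l x)
          = ENNReal.ofReal ((g l x)^2 / f l x) + ENNReal.ofReal (f l x) := by
      intro x
      rw [← ENNReal.ofReal_add (div_nonneg (sq_nonneg _) (hfn x))
          (mul_nonneg (by norm_num) (hgn x)),
        ← ENNReal.ofReal_add (div_nonneg (sq_nonneg _) (hfn x)) (hfn x)]
      congr 1
      have hne := (hfpos l x).ne'
      field_simp
      ring
    have := lintegral_congr (μ := (volume : Measure (EuclideanSpace ℝ (Fin d)))) hpt
    rw [lintegral_add_left hm1, lintegral_add_left hm2, hg2, hfi] at this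
    exact this
  have hA : (∫⁻ x, ENNReal.ofReal ((f l x - g l x)^2 / f l x))
      = (∫⁻ x, ENNReal.ofReal ((g l x)^2 / f l x)) - 1 := by
    apply ENNReal.eq_sub_of_add_eq one_ne_top
    have h2 : ((∫⁻ x, ENNReal.ofReal ((f l x - g l x)^2 / f l x)) + 1) + 1
        = (∫⁻ x, ENNReal.ofReal ((g l x)^2 / f l x)) + 1 := by
      rw [add_assoc, show (1:ℝ≥0∞) + 1 = 2 by norm_num]
      exact hsum
    exact (ENNReal.add_left_inj one_ne_top).mp h2
  have part1 : (∫⁻ x, ENNReal.ofReal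
        ((∑ i, w i * f i x - ∑ i, w i * g i x)^2 / (∑ i, w i * f i x)))
      ≤ ENNReal.ofReal (w l) *
          ((∫⁻ x, ENNReal.ofReal ((g l x)^2 / f l x)) - 1) := by
    calc (∫⁻ x, ENNReal.ofReal
          ((∑ i, w i * f i x - ∑ i, w i * g i x)^2 / (∑ i, w i * f i x)))
        ≤ ∫⁻ x, ENNReal.ofReal (w l) * ENNReal.ofReal ((f l x - g l x)^2 / f l x) := by
          apply lintegral_mono
          intro x
          dsimp only
          rw [← ENNReal.ofReal_mul (hw l).le]
          exact ENNReal.ofReal_le_ofReal (hkey x)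
      _ = ENNReal.ofReal (w l) * ∫⁻ x, ENNReal.ofReal ((f l x - g l x)^2 / f l x) :=
          lintegral_const_mul' _ _ ofReal_ne_top
      _ = ENNReal.ofReal (w l) *
          ((∫⁻ x, ENNReal.ofReal ((g l x)^2 / f l x)) - 1) := by rw [hA]
  refine ⟨part1, ?_⟩
  intro a b hfa hgb hab
  have ht0 : (0:ℝ) ≤ ‖a - b‖^2 := sq_nonneg _
  have hGval : (∫⁻ x, ENNReal.ofReal ((g l x)^2 / f l x))
      = ENNReal.ofReal (rexp (‖a - b‖^2)) := by
    calc (∫⁻ x, ENNReal.ofReal ((g l x)^2 / f l x))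
        = ∫⁻ x, ENNReal.ofReal (rexp (‖a - b‖^2) * stdGauss d (x - ((2:ℝ) • b - a))) := by
          apply lintegral_congr
          intro x
          rw [hfa x, hgb x, stdGauss_ratio d a b x]
      _ = ∫⁻ x, ENNReal.ofReal (rexp (‖a - b‖^2))
            * ENNReal.ofReal (stdGauss d (x - ((2:ℝ) • b - a))) := by
          simp_rw [ENNReal.ofReal_mul (Real.exp_nonneg _)]
      _ = ENNReal.ofReal (rexp (‖a - b‖^2)) := by
          rw [lintegral_const_mul' _ _ ofReal_ne_top, stdGauss_lintegral_sub, mul_one]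
  calc (∫⁻ x, ENNReal.ofReal
        ((∑ i, w i * f i x - ∑ i, w i * g i x)^2 / (∑ i, w i * f i x)))
      ≤ ENNReal.ofReal (w l) *
          ((∫⁻ x, ENNReal.ofReal ((g l x)^2 / f l x)) - 1) := part1
    _ = ENNReal.ofReal (w l) * ENNReal.ofReal (rexp (‖a - b‖^2) - 1) := by
        rw [hGval, ← ENNReal.ofReal_one, ← ENNReal.ofReal_sub _ zero_le_one]
    _ = ENNReal.ofReal (w l * (rexp (‖a - b‖^2) - 1)) :=
        (ENNReal.ofReal_mul (hw l).le).symm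
    _ ≤ ENNReal.ofReal (2 * w l * ‖a - b‖^2) := by
        apply ENNReal.ofReal_le_ofReal
        have hexp := exp_le_one_add_two_mul ht0 hab
        nlinarith [(hw l).le]
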